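/- Under the Mallows model with 0 < φ < 1, consecutive expected positions are separated by at least (1−φ)/(1+φ): for σ drawn with probability φ^{K_τ(σ₀,σ)}/Z and any i ∈ [N−1], E[σ(σ₀⁻¹(i+1))] − E[σ(σ₀⁻¹(i))] ≥ (1−φ)/(1+φ). -/

import Mathlib

def kendallTau {N : ℕ} (σ₁ σ₂ : Equiv.Perm (Fin N)) : ℕ :=
  (Finset.univ.filter fun p : Fin N × Fin N =>
    p.1 < p.2 ∧ ((σ₁ p.1 < σ₁ p.2 ∧ σ₂ p.2 < σ₂ p.1) ∨
                 (σ₁ p.2 < σ₁ p.1 ∧ σ₂ p.1 < σ₂ p.2))).card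

/-- The Mallows normalization constant. -/
noncomputable def mallowsZ (N : ℕ) (φ : ℝ) (σ₀ : Equiv.Perm (Fin N)) : ℝ :=
  ∑ σ : Equiv.Perm (Fin N), φ ^ kendallTau σ₀ σ

/-- Probability of an event under the Mallows distribution with center `σ₀`. -/
noncomputable def mallowsProb (N : ℕ) (φ : ℝ) (σ₀ : Equiv.Perm (Fin N))
    (E : Equiv.Perm (Fin N) → Prop) [DecidablePred E] : ℝ :=
  (∑ σ ∈ Finset.univ.filter E, φ ^ kendallTau σ₀ σ) / mallowsZ N φ σ₀

/-- Expected position of element `i` under the Mallows distribution. -/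
noncomputable def mallowsExp (N : ℕ) (φ : ℝ) (σ₀ : Equiv.Perm (Fin N)) (i : Fin N) : ℝ :=
  (∑ σ : Equiv.Perm (Fin N), ((σ i : ℕ) : ℝ) * φ ^ kendallTau σ₀ σ) / mallowsZ N φ σ₀

open Finset

/-- symmetric (unordered) disagreement set -/
def mallowsSset {N : ℕ} (σ₁ σ₂ : Equiv.Perm (Fin N)) : Finset (Fin N × Fin N) :=
  Finset.univ.filter fun p : Fin N × Fin N =>
    ((σ₁ p.1 < σ₁ p.2 ∧ σ₂ p.2 < σ₂ p.1) ∨ (σ₁ p.2 < σ₁ p.1 ∧ σ₂ p.1 < σ₂ p.2))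

lemma mallowsSset_card {N : ℕ} (σ₁ σ₂ : Equiv.Perm (Fin N)) :
    (mallowsSset σ₁ σ₂).card = 2 * kendallTau σ₁ σ₂ := by
  classical
  have hsplit : mallowsSset σ₁ σ₂ =
      (Finset.univ.filter fun p : Fin N × Fin N => p.1 < p.2 ∧
        ((σ₁ p.1 < σ₁ p.2 ∧ σ₂ p.2 < σ₂ p.1) ∨ (σ₁ p.2 < σ₁ p.1 ∧ σ₂ p.1 < σ₂ p.2))) ∪
      (Finset.univ.filter fun p : Fin N × Fin N => p.2 < p.1 ∧
        ((σ₁ p.1 < σ₁ p.2 ∧ σ₂ p.2 < σ₂ p.1) ∨ (σ₁ p.2 < σ₁ p.1 ∧ σ₂ p.1 < σ₂ p.2))) := by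
    ext p
    simp only [mallowsSset, Finset.mem_filter, Finset.mem_union, Finset.mem_univ, true_and]
    constructor
    · intro h
      have hne : p.1 ≠ p.2 := by
        rcases h with ⟨h1, _⟩ | ⟨h1, _⟩ <;> intro he <;> rw [he] at h1 <;> exact lt_irrefl _ h1
      rcases lt_or_gt_of_ne hne with h' | h'
      · exact Or.inl ⟨h', h⟩
      · exact Or.inr ⟨h', h⟩
    · rintro (⟨_, h⟩ | ⟨_, h⟩) <;> exact h
  have hdisj : Disjoint
      (Finset.univ.filter fun p : Fin N × Fin N => p.1 < p.2 ∧
        ((σ₁ p.1 < σ₁ p.2 ∧ σ₂ p.2 < σ₂ p.1) ∨ (σ₁ p.2 < σ₁ p.1 ∧ σ₂ p.1 < σ₂ p.2)))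
      (Finset.univ.filter fun p : Fin N × Fin N => p.2 < p.1 ∧
        ((σ₁ p.1 < σ₁ p.2 ∧ σ₂ p.2 < σ₂ p.1) ∨ (σ₁ p.2 < σ₁ p.1 ∧ σ₂ p.1 < σ₂ p.2))) := by
    rw [Finset.disjoint_left]
    intro p hp hp'
    simp only [Finset.mem_filter] at hp hp'
    exact absurd hp'.2.1 (not_lt.mpr hp.2.1.le)
  have hswap : (Finset.univ.filter fun p : Fin N × Fin N => p.2 < p.1 ∧
        ((σ₁ p.1 < σ₁ p.2 ∧ σ₂ p.2 < σ₂ p.1) ∨ (σ₁ p.2 < σ₁ p.1 ∧ σ₂ p.1 < σ₂ p.2))).card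
      = (Finset.univ.filter fun p : Fin N × Fin N => p.1 < p.2 ∧
        ((σ₁ p.1 < σ₁ p.2 ∧ σ₂ p.2 < σ₂ p.1) ∨ (σ₁ p.2 < σ₁ p.1 ∧ σ₂ p.1 < σ₂ p.2))).card := by
    refine Finset.card_bij' (fun p _ => p.swap) (fun p _ => p.swap) ?_ ?_
      (fun p _ => Prod.swap_swap p) (fun p _ => Prod.swap_swap p)
    · intro p hp
      simp only [Finset.mem_filter, Finset.mem_univ, true_and, Prod.fst_swap,
        Prod.snd_swap] at hp ⊢
      exact ⟨hp.1, hp.2.symm⟩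
    · intro p hp
      simp only [Finset.mem_filter, Finset.mem_univ, true_and, Prod.fst_swap,
        Prod.snd_swap] at hp ⊢
      exact ⟨hp.1, hp.2.symm⟩
  rw [hsplit, Finset.card_union_of_disjoint hdisj, hswap]
  show _ = 2 * (Finset.univ.filter fun p : Fin N × Fin N => p.1 < p.2 ∧
        ((σ₁ p.1 < σ₁ p.2 ∧ σ₂ p.2 < σ₂ p.1) ∨ (σ₁ p.2 < σ₁ p.1 ∧ σ₂ p.1 < σ₂ p.2))).card
  ring

lemma swap_lt_iff {N : ℕ} {i j u v : Fin N} (hij : (j : ℕ) = (i : ℕ) + 1)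
    (h1 : ¬(u = i ∧ v = j)) (h2 : ¬(u = j ∧ v = i)) :
    (Equiv.swap i j u < Equiv.swap i j v ↔ u < v) := by
  have key : ∀ x : Fin N, ((Equiv.swap i j x : Fin N) : ℕ) =
      if (x : ℕ) = (i : ℕ) then (j : ℕ) else if (x : ℕ) = (j : ℕ) then (i : ℕ) else (x : ℕ) := by
    intro x
    rw [Equiv.swap_apply_def]
    split_ifs <;> simp_all [Fin.ext_iff]
  have h1' : ¬((u : ℕ) = (i : ℕ) ∧ (v : ℕ) = (j : ℕ)) := by
    simpa [Fin.ext_iff] using h1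
  have h2' : ¬((u : ℕ) = (j : ℕ) ∧ (v : ℕ) = (i : ℕ)) := by
    simpa [Fin.ext_iff] using h2
  rw [Fin.lt_def, Fin.lt_def, key, key]
  split_ifs <;> omega

lemma kendall_swap {N : ℕ} (σ₀ σ : Equiv.Perm (Fin N)) (i j : Fin N)
    (hij : (j : ℕ) = (i : ℕ) + 1) (h : σ (σ₀⁻¹ i) < σ (σ₀⁻¹ j)) :
    kendallTau σ₀ (σ * Equiv.swap (σ₀⁻¹ i) (σ₀⁻¹ j)) = kendallTau σ₀ σ + 1 := by
  classical
  set a := σ₀⁻¹ i with ha'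
  set b := σ₀⁻¹ j with hb'
  set t := Equiv.swap a b with ht
  have hineq : i < j := by rw [Fin.lt_def]; omega
  have hijne : i ≠ j := ne_of_lt hineq
  have hσ₀a : σ₀ a = i := σ₀.apply_symm_apply i
  have hσ₀b : σ₀ b = j := σ₀.apply_symm_apply j
  have hab : a ≠ b := by
    intro he
    exact hijne (by rw [← hσ₀a, ← hσ₀b, he])
  have hta : t a = b := Equiv.swap_apply_left a b
  have htb : t b = a := Equiv.swap_apply_right a b
  have hcomm : ∀ x, σ₀ (t x) = Equiv.swap i j (σ₀ x) := by
    intro x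
    have := Equiv.swap_apply_apply σ₀ a b
    rw [hσ₀a, hσ₀b] at this
    rw [this]
    simp [Equiv.Perm.mul_apply, ht]
  set m : Fin N × Fin N → Fin N × Fin N := fun p => (t p.1, t p.2) with hm
  have hmm : ∀ p, m (m p) = p := by
    intro p; simp [hm, Equiv.swap_apply_self, ht]
  -- the pointwise equivalence away from (a,b),(b,a)
  have hC : ∀ p : Fin N × Fin N, p ≠ (a, b) → p ≠ (b, a) →
      (p ∈ mallowsSset σ₀ (σ * t) ↔ m p ∈ mallowsSset σ₀ σ) := by
    intro p hp1 hp2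
    have e1 : ¬(σ₀ p.1 = i ∧ σ₀ p.2 = j) := by
      rintro ⟨hu, hv⟩
      apply hp1
      have : p.1 = a := by rw [ha']; exact (Equiv.eq_symm_apply σ₀).mpr hu
      have : p.2 = b := by rw [hb']; exact (Equiv.eq_symm_apply σ₀).mpr hv
      exact Prod.ext ‹p.1 = a› ‹p.2 = b›
    have e2 : ¬(σ₀ p.1 = j ∧ σ₀ p.2 = i) := by
      rintro ⟨hu, hv⟩
      apply hp2
      have : p.1 = b := by rw [hb']; exact (Equiv.eq_symm_apply σ₀).mpr hu
      have : p.2 = a := by rw [ha']; exact (Equiv.eq_symm_apply σ₀).mpr hv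
      exact Prod.ext ‹p.1 = b› ‹p.2 = a›
    have key : (σ₀ p.1 < σ₀ p.2 ↔ σ₀ (t p.1) < σ₀ (t p.2)) := by
      rw [hcomm, hcomm]
      exact (swap_lt_iff hij e1 e2).symm
    have key' : (σ₀ p.2 < σ₀ p.1 ↔ σ₀ (t p.2) < σ₀ (t p.1)) := by
      rw [hcomm, hcomm]
      refine (swap_lt_iff hij ?_ ?_).symm
      · rintro ⟨hu, hv⟩; exact e2 ⟨hv, hu⟩
      · rintro ⟨hu, hv⟩; exact e1 ⟨hv, hu⟩
    simp only [mallowsSset, Finset.mem_filter, Finset.mem_univ, true_and]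
    simp only [Equiv.Perm.mul_apply, hm]
    rw [key, key']
  have hmem1 : (a, b) ∈ mallowsSset σ₀ (σ * t) := by
    simp only [mallowsSset, Finset.mem_filter, Finset.mem_univ, true_and]
    simp only [Equiv.Perm.mul_apply]
    left
    rw [hσ₀a, hσ₀b, hta, htb]
    exact ⟨hineq, h⟩
  have hmem2 : (b, a) ∈ mallowsSset σ₀ (σ * t) := by
    simp only [mallowsSset, Finset.mem_filter, Finset.mem_univ, true_and]
    simp only [Equiv.Perm.mul_apply]
    right
    rw [hσ₀a, hσ₀b, hta, htb]
    exact ⟨hineq, h⟩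
  have hnot1 : (a, b) ∉ mallowsSset σ₀ σ := by
    simp only [mallowsSset, Finset.mem_filter, Finset.mem_univ, true_and]
    rw [hσ₀a, hσ₀b]
    rintro (⟨_, h2⟩ | ⟨h1, _⟩)
    · exact absurd h (not_lt.mpr h2.le)
    · exact absurd hineq (not_lt.mpr h1.le)
  have hnot2 : (b, a) ∉ mallowsSset σ₀ σ := by
    simp only [mallowsSset, Finset.mem_filter, Finset.mem_univ, true_and]
    rw [hσ₀a, hσ₀b]
    rintro (⟨h1, _⟩ | ⟨_, h2⟩)
    · exact absurd hineq (not_lt.mpr h1.le)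
    · exact absurd h (not_lt.mpr h2.le)
  have habne : ((a, b) : Fin N × Fin N) ≠ (b, a) := by
    intro he
    exact hab (congrArg Prod.fst he)
  set P : Finset (Fin N × Fin N) := {(a, b), (b, a)} with hP
  have hPsub : P ⊆ mallowsSset σ₀ (σ * t) := by
    intro p hp
    rcases Finset.mem_insert.mp hp with h' | h'
    · rw [h']; exact hmem1
    · rw [Finset.mem_singleton.mp h']; exact hmem2
  have hPcard : P.card = 2 := by
    rw [hP, Finset.card_insert_of_notMem (by simp [habne]), Finset.card_singleton]
  have hdiff : (mallowsSset σ₀ (σ * t) \ P).card = (mallowsSset σ₀ σ).card := by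
    apply Finset.card_bij' (fun p _ => m p) (fun p _ => m p)
    · intro p hp
      rw [Finset.mem_sdiff] at hp
      have h1 : p ≠ (a, b) := by intro he; exact hp.2 (by simp [hP, he])
      have h2 : p ≠ (b, a) := by intro he; exact hp.2 (by simp [hP, he])
      exact (hC p h1 h2).mp hp.1
    · intro q hq
      have h1 : q ≠ (a, b) := by intro he; rw [he] at hq; exact hnot1 hq
      have h2 : q ≠ (b, a) := by intro he; rw [he] at hq; exact hnot2 hq
      have hmq1 : m q ≠ (a, b) := by
        intro he
        have := congrArg m he
        rw [hmm] at this
        apply h2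
        rw [this]; simp [hm, hta, htb]
      have hmq2 : m q ≠ (b, a) := by
        intro he
        have := congrArg m he
        rw [hmm] at this
        apply h1
        rw [this]; simp [hm, hta, htb]
      rw [Finset.mem_sdiff]
      constructor
      · rw [hC (m q) hmq1 hmq2, hmm]; exact hq
      · intro hmem
        rcases Finset.mem_insert.mp hmem with h' | h'
        · exact hmq1 h'
        · exact hmq2 (Finset.mem_singleton.mp h')
    · intro p _; exact hmm p
    · intro p _; exact hmm p
  have hcard : (mallowsSset σ₀ (σ * t)).card = (mallowsSset σ₀ σ).card + 2 := by
    rw [← Finset.card_sdiff_add_card_eq_card hPsub, hdiff, hPcard]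
  have h2K := mallowsSset_card σ₀ (σ * t)
  have h2K' := mallowsSset_card σ₀ σ
  omega

theorem mallows_expectation_gap (N : ℕ) (φ : ℝ)
    (hφ0 : 0 < φ) (hφ1 : φ < 1) (σ₀ : Equiv.Perm (Fin N)) (i j : Fin N)
    (hij : (j : ℕ) = (i : ℕ) + 1) :
    mallowsExp N φ σ₀ (σ₀⁻¹ j) - mallowsExp N φ σ₀ (σ₀⁻¹ i) ≥ (1 - φ) / (1 + φ) := by
  classical
  set a := σ₀⁻¹ i with ha'
  set b := σ₀⁻¹ j with hb'
  set t := Equiv.swap a b with ht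
  have hijne : i ≠ j := by
    intro he; rw [he] at hij; omega
  have hab : a ≠ b := fun he => hijne (σ₀.symm.injective he)
  have hta : t a = b := Equiv.swap_apply_left a b
  have htb : t b = a := Equiv.swap_apply_right a b
  set K : Equiv.Perm (Fin N) → ℕ := fun σ => kendallTau σ₀ σ with hK
  set g : Equiv.Perm (Fin N) → ℝ := fun σ =>
    ((1 + φ) * (((σ b : ℕ) : ℝ) - ((σ a : ℕ) : ℝ)) - (1 - φ)) * φ ^ K σ with hg
  have hZ : 0 < mallowsZ N φ σ₀ := by
    apply Finset.sum_pos (fun σ _ => pow_pos hφ0 _) ⟨1, Finset.mem_univ 1⟩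
  have h1φ : (0 : ℝ) < 1 + φ := by linarith
  -- pairing
  have hpair : ∀ σ : Equiv.Perm (Fin N), σ a < σ b → 0 ≤ g σ + g (σ * t) := by
    intro σ hlt
    have hKs : K (σ * t) = K σ + 1 := kendall_swap σ₀ σ i j hij hlt
    have h1 : (σ * t) b = σ a := by rw [Equiv.Perm.mul_apply, htb]
    have h2 : (σ * t) a = σ b := by rw [Equiv.Perm.mul_apply, hta]
    have hd : ((σ a : ℕ) : ℝ) + 1 ≤ ((σ b : ℕ) : ℝ) := by
      have : (σ a : ℕ) + 1 ≤ (σ b : ℕ) := hlt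
      exact_mod_cast this
    have hA : (0 : ℝ) < φ ^ K σ := pow_pos hφ0 _
    rw [hg]
    simp only [h1, h2, hKs, pow_succ]
    set d : ℝ := ((σ b : ℕ) : ℝ) - ((σ a : ℕ) : ℝ) with hdd
    have hkey : ((1 + φ) * d - (1 - φ)) * φ ^ K σ
        + ((1 + φ) * (((σ a : ℕ) : ℝ) - ((σ b : ℕ) : ℝ)) - (1 - φ)) * (φ ^ K σ * φ)
        = φ ^ K σ * ((1 - φ) * ((1 + φ) * (d - 1))) := by
      rw [hdd]; ring
    rw [hkey]
    apply mul_nonneg hA.le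
    apply mul_nonneg (by linarith)
    apply mul_nonneg (by linarith)
    rw [hdd]; linarith
  have hall : ∀ σ : Equiv.Perm (Fin N), 0 ≤ g σ + g (σ * t) := by
    intro σ
    have hne : σ a ≠ σ b := fun he => hab (σ.injective he)
    rcases lt_or_gt_of_ne hne with hlt | hgt
    · exact hpair σ hlt
    · have h1 : (σ * t) a = σ b := by rw [Equiv.Perm.mul_apply, hta]
      have h2 : (σ * t) b = σ a := by rw [Equiv.Perm.mul_apply, htb]
      have hlt' : (σ * t) a < (σ * t) b := by rw [h1, h2]; exact hgt
      have := hpair (σ * t) hlt'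
      have hback : σ * t * t = σ := by
        rw [mul_assoc, ht, Equiv.swap_mul_self, mul_one]
      rw [hback] at this
      linarith
  have hsum2 : 0 ≤ ∑ σ : Equiv.Perm (Fin N), (g σ + g (σ * t)) :=
    Finset.sum_nonneg fun σ _ => hall σ
  have hre : ∑ σ : Equiv.Perm (Fin N), g (σ * t) = ∑ σ : Equiv.Perm (Fin N), g σ :=
    Fintype.sum_equiv (Equiv.mulRight t) (fun σ => g (σ * t)) g (fun σ => rfl)
  have hsum : 0 ≤ ∑ σ : Equiv.Perm (Fin N), g σ := by
    rw [Finset.sum_add_distrib, hre] at hsum2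
    linarith
  -- final algebra
  rw [ge_iff_le, mallowsExp, mallowsExp, div_sub_div_same, ← Finset.sum_sub_distrib]
  have hterm : ∀ σ : Equiv.Perm (Fin N),
      ((σ b : ℕ) : ℝ) * φ ^ kendallTau σ₀ σ - ((σ a : ℕ) : ℝ) * φ ^ kendallTau σ₀ σ
      = (((σ b : ℕ) : ℝ) - ((σ a : ℕ) : ℝ)) * φ ^ K σ := by
    intro σ; rw [hK]; ring
  rw [Finset.sum_congr rfl fun σ _ => hterm σ]
  rw [div_le_div_iff₀ h1φ hZ]
  have hexpand : (∑ σ : Equiv.Perm (Fin N), (((σ b : ℕ) : ℝ) - ((σ a : ℕ) : ℝ)) * φ ^ K σ)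
      * (1 + φ) - (1 - φ) * mallowsZ N φ σ₀ = ∑ σ : Equiv.Perm (Fin N), g σ := by
    rw [mallowsZ, Finset.sum_mul, Finset.mul_sum, ← Finset.sum_sub_distrib]
    apply Finset.sum_congr rfl
    intro σ _
    rw [hg, hK]
    ring
  linarith [hexpand, hsum]
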